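/- There exists a constant C depending only on d with the following property. For every p ∈ ℝ^d, μ(□_m, p) ≤ 3^{−d(m−n)} · Σ_{z ∈ 3^n ℤ^d ∩ □_m} μ(□_n(z), p) + C · P² · |p|² · 3^{−(n−l)}. -/

import Mathlib

attribute [local instance] Classical.propDecidable

noncomputable section

/-- The triadic cube of size `3^k` centered at `z`. -/
def triCube (d k : ℕ) (z : EuclideanSpace ℝ (Fin d)) : Set (EuclideanSpace ℝ (Fin d)) :=
  {x | ∀ i, z i - 3 ^ k / 2 ≤ x i ∧ x i < z i + 3 ^ k / 2}

/-- `z` is a point of the lattice `3^l ℤ^d`. -/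
def isLatticePt (d l : ℕ) (z : EuclideanSpace ℝ (Fin d)) : Prop :=
  ∀ i, ∃ a : ℤ, z i = 3 ^ l * a

/-- The thickened boundary `∂_*^{(l)} Q` of the cube `Q = □_k(z)`: the union of the
subcubes `□_l(z')`, `z' ∈ 3^l ℤ^d ∩ Q`, whose closure meets the topological boundary
of `Q`. -/
def thickBdry (d l k : ℕ) (z : EuclideanSpace ℝ (Fin d)) : Set (EuclideanSpace ℝ (Fin d)) :=
  ⋃ z' ∈ {z' : EuclideanSpace ℝ (Fin d) | isLatticePt d l z' ∧ z' ∈ triCube d k z ∧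
      (closure (triCube d l z') ∩ frontier (triCube d k z)).Nonempty},
    triCube d l z'

/-- The set of Dirichlet energies of admissible functions (equal to `ℓ_p` on the
thickened boundary) on the cube `□_k(z)`. -/
def cubeEnergies (d : ℕ) (W : Finset (EuclideanSpace ℝ (Fin d))) (l k : ℕ)
    (z : EuclideanSpace ℝ (Fin d)) (p : EuclideanSpace ℝ (Fin d)) : Set ℝ :=
  {E | ∃ u : EuclideanSpace ℝ (Fin d) → ℝ,
    (∀ x ∈ W, x ∈ thickBdry d l k z → u x = ∑ i, p i * x i) ∧
    E = ∑ x ∈ W.filter (· ∈ triCube d k z),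
          ∑ y ∈ (W.filter (· ∈ triCube d k z)).filter (fun y => y ≠ x ∧ dist x y ≤ 1),
            (1/2) * (u x - u y)^2}

/-- The Dirichlet subadditive quantity `μ(□_k(z), p)`. -/
def muCG (d : ℕ) (W : Finset (EuclideanSpace ℝ (Fin d))) (l k : ℕ)
    (z : EuclideanSpace ℝ (Fin d)) (p : EuclideanSpace ℝ (Fin d)) : ℝ :=
  ((3 : ℝ) ^ (d * k))⁻¹ * sInf (cubeEnergies d W l k z p)



namespace AppSub

def rd (k : ℕ) (t : ℝ) : ℤ := ⌊t / 3 ^ k + 1 / 2⌋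

lemma rd_eq_iff {k : ℕ} {a : ℤ} {t : ℝ} :
    rd k t = a ↔ (3:ℝ) ^ k * a - 3 ^ k / 2 ≤ t ∧ t < 3 ^ k * a + 3 ^ k / 2 := by
  have hk : (0:ℝ) < 3 ^ k := by positivity
  have e1 : ((a:ℝ) ≤ t / 3 ^ k + 1 / 2) ↔ (3:ℝ) ^ k * a - 3 ^ k / 2 ≤ t := by
    rw [← sub_le_iff_le_add, le_div_iff₀ hk]
    constructor <;> intro h <;> linarith
  have e2 : (t / 3 ^ k + 1 / 2 < (a:ℝ) + 1) ↔ t < 3 ^ k * a + 3 ^ k / 2 := by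
    rw [← lt_sub_iff_add_lt, div_lt_iff₀ hk]
    constructor <;> intro h <;> linarith
  rw [rd, Int.floor_eq_iff]
  exact and_congr e1 e2

lemma rd_bounds (k : ℕ) (t : ℝ) :
    (3:ℝ) ^ k * (rd k t : ℝ) - 3 ^ k / 2 ≤ t ∧ t < 3 ^ k * (rd k t : ℝ) + 3 ^ k / 2 :=
  rd_eq_iff.mp rfl

lemma nest {l n : ℕ} (hln : l ≤ n) (t : ℝ) :
    (3:ℝ) ^ n * (rd n t : ℝ) - 3 ^ n / 2 ≤ 3 ^ l * (rd l t : ℝ) - 3 ^ l / 2 ∧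
    (3:ℝ) ^ l * (rd l t : ℝ) + 3 ^ l / 2 ≤ 3 ^ n * (rd n t : ℝ) + 3 ^ n / 2 := by
  set b := rd l t with hbdef
  set a := rd n t with hadef
  obtain ⟨hb1, hb2⟩ := rd_bounds l t
  obtain ⟨ha1, ha2⟩ := rd_bounds n t
  set r : ℤ := 3 ^ (n - l) with hrdef
  have hrodd : Odd r := Odd.pow (by decide)
  have hr : (3:ℝ) ^ n = 3 ^ l * (r : ℝ) := by
    rw [hrdef]; push_cast; rw [← pow_add]; congr 1; omega
  have hna : (3:ℝ) ^ n * (a:ℝ) = 3 ^ l * ((r:ℝ) * (a:ℝ)) := by rw [hr]; ring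
  have hL : (0:ℝ) < 3 ^ l := by positivity
  constructor
  · have key : r * (2 * a - 1) ≤ 2 * b - 1 := by
      by_contra hcon
      push_neg at hcon
      have heven : Even (r * (2 * a - 1) - (2 * b - 1)) := by
        obtain ⟨e, he⟩ : Odd (r * (2 * a - 1)) := hrodd.mul ⟨a - 1, by ring⟩
        exact ⟨e - b + 1, by omega⟩
      have h2 : 2 * b - 1 ≤ r * (2 * a - 1) - 2 := by
        obtain ⟨c, hc⟩ := heven; omega
      have h2R : (2 * (b:ℝ) - 1) ≤ (r:ℝ) * (2 * (a:ℝ) - 1) - 2 := by exact_mod_cast h2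
      have h2l : (3:ℝ)^l * (2 * (b:ℝ) - 1) ≤ 3^l * ((r:ℝ) * (2 * (a:ℝ) - 1) - 2) :=
        mul_le_mul_of_nonneg_left h2R hL.le
      have hL1 : (1:ℝ) ≤ 3 ^ l := one_le_pow₀ (by norm_num)
      linarith [h2l, hna, hr, hb2, ha1]
    have keyR : (r:ℝ) * (2 * (a:ℝ) - 1) ≤ 2 * (b:ℝ) - 1 := by exact_mod_cast key
    have hkl : (3:ℝ)^l * ((r:ℝ) * (2 * (a:ℝ) - 1)) ≤ 3^l * (2 * (b:ℝ) - 1) :=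
      mul_le_mul_of_nonneg_left keyR hL.le
    linarith [hkl, hna, hr]
  · have key : 2 * b + 1 ≤ r * (2 * a + 1) := by
      by_contra hcon
      push_neg at hcon
      have heven : Even (2 * b + 1 - r * (2 * a + 1)) := by
        obtain ⟨e, he⟩ : Odd (r * (2 * a + 1)) := hrodd.mul ⟨a, by ring⟩
        exact ⟨b - e, by omega⟩
      have h2 : r * (2 * a + 1) ≤ 2 * b - 1 := by
        obtain ⟨c, hc⟩ := heven; omega
      have h2R : (r:ℝ) * (2 * (a:ℝ) + 1) ≤ 2 * (b:ℝ) - 1 := by exact_mod_cast h2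
      have h2l : (3:ℝ)^l * ((r:ℝ) * (2 * (a:ℝ) + 1)) ≤ 3^l * (2 * (b:ℝ) - 1) :=
        mul_le_mul_of_nonneg_left h2R hL.le
      linarith [h2l, hna, hr, hb1, ha2]
    have keyR : 2 * (b:ℝ) + 1 ≤ (r:ℝ) * (2 * (a:ℝ) + 1) := by exact_mod_cast key
    have hkl : (3:ℝ)^l * (2 * (b:ℝ) + 1) ≤ 3^l * ((r:ℝ) * (2 * (a:ℝ) + 1)) :=
      mul_le_mul_of_nonneg_left keyR hL.le
    linarith [hkl, hna, hr]

lemma nest_top {l n : ℕ} (hln : l ≤ n) (t : ℝ)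
    (h : (3:ℝ) ^ n * (rd n t : ℝ) + 3 ^ n / 2 - 1 ≤ t) :
    (3:ℝ) ^ l * (rd l t : ℝ) + 3 ^ l / 2 = 3 ^ n * (rd n t : ℝ) + 3 ^ n / 2 := by
  set b := rd l t with hbdef
  set a := rd n t with hadef
  obtain ⟨hb1, hb2⟩ := rd_bounds l t
  obtain ⟨ha1, ha2⟩ := rd_bounds n t
  have hup := (nest hln t).2
  set r : ℤ := 3 ^ (n - l) with hrdef
  have hrodd : Odd r := Odd.pow (by decide)
  have hr : (3:ℝ) ^ n = 3 ^ l * (r : ℝ) := by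
    rw [hrdef]; push_cast; rw [← pow_add]; congr 1; omega
  have hna : (3:ℝ) ^ n * (a:ℝ) = 3 ^ l * ((r:ℝ) * (a:ℝ)) := by rw [hr]; ring
  have hL1 : (1:ℝ) ≤ 3 ^ l := one_le_pow₀ (by norm_num)
  have hL : (0:ℝ) < 3 ^ l := by positivity
  set e : ℤ := r * (2 * a + 1) - (2 * b + 1) with hedef
  have heven : Even e := by
    obtain ⟨c, hc⟩ : Odd (r * (2 * a + 1)) := hrodd.mul ⟨a, by ring⟩
    exact ⟨c - b, by omega⟩
  have he0 : 0 ≤ e := by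
    have h1 : (2 * (b:ℝ) + 1) ≤ (r:ℝ) * (2 * (a:ℝ) + 1) := by
      apply le_of_mul_le_mul_left _ hL
      linarith [hup, hna, hr]
    have : (2*b+1 : ℤ) ≤ r*(2*a+1) := by exact_mod_cast h1
    omega
  have hesmall : ((e:ℝ)) < 2 := by
    have h1 : (3:ℝ)^l * (e:ℝ) < 2 := by
      have hcast : ((e:ℝ)) = (r:ℝ) * (2 * (a:ℝ) + 1) - (2 * (b:ℝ) + 1) := by
        rw [hedef]; push_cast; ring
      rw [hcast]
      have expand : (3:ℝ)^l * ((r:ℝ) * (2 * (a:ℝ) + 1) - (2 * (b:ℝ) + 1))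
          = 2 * (3^n * (a:ℝ) + 3^n/2) - 2 * (3^l * (b:ℝ) + 3^l/2) := by
        rw [hr]; ring
      rw [expand]
      linarith [h, hb2]
    have he0R : (0:ℝ) ≤ (e:ℝ) := by exact_mod_cast he0
    nlinarith [mul_le_mul_of_nonneg_right hL1 he0R]
  have he2 : e < 2 := by exact_mod_cast hesmall
  have he : e = 0 := by obtain ⟨c, hc⟩ := heven; omega
  have heZ : r * (2 * a + 1) = 2 * b + 1 := by omega
  have heR : (r:ℝ) * (2*(a:ℝ)+1) = 2*(b:ℝ)+1 := by exact_mod_cast heZ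
  have heRl : (3:ℝ)^l * ((r:ℝ) * (2*(a:ℝ)+1)) = 3^l * (2*(b:ℝ)+1) := by rw [heR]
  linarith [heRl, hna, hr]

lemma nest_bot {l n : ℕ} (hln : l ≤ n) (t : ℝ)
    (h : t < (3:ℝ) ^ n * (rd n t : ℝ) - 3 ^ n / 2 + 1) :
    (3:ℝ) ^ l * (rd l t : ℝ) - 3 ^ l / 2 = 3 ^ n * (rd n t : ℝ) - 3 ^ n / 2 := by
  set b := rd l t with hbdef
  set a := rd n t with hadef
  obtain ⟨hb1, hb2⟩ := rd_bounds l t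
  obtain ⟨ha1, ha2⟩ := rd_bounds n t
  have hlo := (nest hln t).1
  set r : ℤ := 3 ^ (n - l) with hrdef
  have hrodd : Odd r := Odd.pow (by decide)
  have hr : (3:ℝ) ^ n = 3 ^ l * (r : ℝ) := by
    rw [hrdef]; push_cast; rw [← pow_add]; congr 1; omega
  have hna : (3:ℝ) ^ n * (a:ℝ) = 3 ^ l * ((r:ℝ) * (a:ℝ)) := by rw [hr]; ring
  have hL1 : (1:ℝ) ≤ 3 ^ l := one_le_pow₀ (by norm_num)
  have hL : (0:ℝ) < 3 ^ l := by positivity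
  set e : ℤ := (2 * b - 1) - r * (2 * a - 1) with hedef
  have heven : Even e := by
    obtain ⟨c, hc⟩ : Odd (r * (2 * a - 1)) := hrodd.mul ⟨a - 1, by ring⟩
    exact ⟨b - c - 1, by omega⟩
  have he0 : 0 ≤ e := by
    have h1 : (r:ℝ) * (2 * (a:ℝ) - 1) ≤ (2 * (b:ℝ) - 1) := by
      apply le_of_mul_le_mul_left _ hL
      linarith [hlo, hna, hr]
    have : (r*(2*a-1) : ℤ) ≤ 2*b-1 := by exact_mod_cast h1
    omega
  have hesmall : ((e:ℝ)) < 2 := by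
    have h1 : (3:ℝ)^l * (e:ℝ) < 2 := by
      have hcast : ((e:ℝ)) = (2 * (b:ℝ) - 1) - (r:ℝ) * (2 * (a:ℝ) - 1) := by
        rw [hedef]; push_cast; ring
      rw [hcast]
      have expand : (3:ℝ)^l * ((2 * (b:ℝ) - 1) - (r:ℝ) * (2 * (a:ℝ) - 1))
          = 2 * (3^l * (b:ℝ) - 3^l/2) - 2 * (3^n * (a:ℝ) - 3^n/2) := by
        rw [hr]; ring
      rw [expand]
      linarith [h, hb1]
    have he0R : (0:ℝ) ≤ (e:ℝ) := by exact_mod_cast he0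
    nlinarith [mul_le_mul_of_nonneg_right hL1 he0R]
  have he2 : e < 2 := by exact_mod_cast hesmall
  have he : e = 0 := by obtain ⟨c, hc⟩ := heven; omega
  have heZ : r * (2 * a - 1) = 2 * b - 1 := by omega
  have heR : (r:ℝ) * (2*(a:ℝ)-1) = 2*(b:ℝ)-1 := by exact_mod_cast heZ
  have heRl : (3:ℝ)^l * ((r:ℝ) * (2*(a:ℝ)-1)) = 3^l * (2*(b:ℝ)-1) := by rw [heR]
  linarith [heRl, hna, hr]



variable {d : ℕ}

lemma closure_subset_closed (k : ℕ) (z : EuclideanSpace ℝ (Fin d)) :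
    closure (triCube d k z) ⊆ {x | ∀ i, z i - 3 ^ k / 2 ≤ x i ∧ x i ≤ z i + 3 ^ k / 2} := by
  apply closure_minimal
  · intro x hx i; exact ⟨(hx i).1, (hx i).2.le⟩
  · have : {x : EuclideanSpace ℝ (Fin d) | ∀ i, z i - 3 ^ k / 2 ≤ x i ∧ x i ≤ z i + 3 ^ k / 2}
        = ⋂ i, (EuclideanSpace.proj (𝕜 := ℝ) i) ⁻¹' (Set.Icc (z i - 3 ^ k / 2) (z i + 3 ^ k / 2)) := by
      ext x; simp [Set.mem_iInter, Set.mem_Icc]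
    rw [this]
    exact isClosed_iInter fun i => IsClosed.preimage (EuclideanSpace.proj i).continuous isClosed_Icc

lemma closed_subset_closure (k : ℕ) (z q : EuclideanSpace ℝ (Fin d))
    (hq : ∀ i, z i - 3 ^ k / 2 ≤ q i ∧ q i ≤ z i + 3 ^ k / 2) :
    q ∈ closure (triCube d k z) := by
  rw [mem_closure_iff_seq_limit]
  have hk : (0:ℝ) < 3 ^ k := by positivity
  refine ⟨fun t => q + ((1:ℝ)/(t+1)) • (z - q), fun t => ?_, ?_⟩
  · intro i
    have hs0 : (0:ℝ) < 1/((t:ℝ)+1) := by positivity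
    have hs1 : (1:ℝ)/((t:ℝ)+1) ≤ 1 := by
      rw [div_le_one (by positivity)]; simp
    show z i - 3 ^ k / 2 ≤ (q + ((1:ℝ)/(t+1)) • (z - q)) i ∧ (q + ((1:ℝ)/(t+1)) • (z - q)) i < z i + 3 ^ k / 2
    have happ : (q + ((1:ℝ)/(t+1)) • (z - q)) i = q i + (1/((t:ℝ)+1)) * (z i - q i) := rfl
    rw [happ]
    set s := (1:ℝ)/((t:ℝ)+1)
    constructor
    · nlinarith [(hq i).1, (hq i).2]
    · nlinarith [(hq i).1, (hq i).2]
  · have h0 : Filter.Tendsto (fun t : ℕ => (1:ℝ)/(t+1)) Filter.atTop (nhds 0) :=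
      tendsto_one_div_add_atTop_nhds_zero_nat
    have := ((h0.smul_const (z - q)).const_add q)
    simpa using this

lemma interior_subset_open (k : ℕ) (z q : EuclideanSpace ℝ (Fin d))
    (hq : q ∈ interior (triCube d k z)) :
    ∀ i, z i - 3 ^ k / 2 < q i ∧ q i < z i + 3 ^ k / 2 := by
  obtain ⟨ε, hε, hball⟩ := Metric.isOpen_iff.mp isOpen_interior q hq
  have hball' : Metric.ball q ε ⊆ triCube d k z := hball.trans interior_subset
  intro i
  have hmem : ∀ c : ℝ, |c| < ε → q + c • (EuclideanSpace.single i (1:ℝ)) ∈ triCube d k z := by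
    intro c hc
    apply hball'
    rw [Metric.mem_ball, dist_eq_norm]
    have : q + c • EuclideanSpace.single i (1:ℝ) - q = c • EuclideanSpace.single i (1:ℝ) := by abel
    rw [this, norm_smul, EuclideanSpace.norm_single]
    simpa using hc
  have happ : ∀ c : ℝ, (q + c • (EuclideanSpace.single i (1:ℝ))) i = q i + c := by
    intro c
    have : (q + c • (EuclideanSpace.single i (1:ℝ))) i
        = q i + c * (EuclideanSpace.single i (1:ℝ) i) := rfl
    rw [this, EuclideanSpace.single_apply]
    simp
  have h1 := hmem (-(ε/2)) (by rw [abs_neg, abs_of_pos (by positivity)]; linarith)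
  have h2 := hmem (ε/2) (by rw [abs_of_pos (by positivity)]; linarith)
  have e1 := (h1 i).1
  have e2 := (h2 i).2
  rw [happ] at e1 e2
  constructor <;> linarith

lemma mem_frontier_of (k : ℕ) (z q : EuclideanSpace ℝ (Fin d))
    (hq : ∀ i, z i - 3 ^ k / 2 ≤ q i ∧ q i ≤ z i + 3 ^ k / 2)
    (hi : ∃ i, q i = z i - 3 ^ k / 2 ∨ q i = z i + 3 ^ k / 2) :
    q ∈ frontier (triCube d k z) := by
  constructor
  · exact closed_subset_closure k z q hq
  · intro hint
    obtain ⟨i, hqi⟩ := hi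
    have := interior_subset_open k z q hint i
    rcases hqi with h | h
    · rw [h] at this; exact absurd this.1 (lt_irrefl _)
    · rw [h] at this; exact absurd this.2 (lt_irrefl _)

lemma frontier_char (k : ℕ) (z q : EuclideanSpace ℝ (Fin d))
    (hq : q ∈ frontier (triCube d k z)) :
    (∀ i, z i - 3 ^ k / 2 ≤ q i ∧ q i ≤ z i + 3 ^ k / 2) ∧
    (∃ i, q i = z i - 3 ^ k / 2 ∨ q i = z i + 3 ^ k / 2) := by
  obtain ⟨hcl, hnint⟩ := hq
  have hclosed := closure_subset_closed k z hcl
  refine ⟨hclosed, ?_⟩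
  by_contra hcon
  push_neg at hcon
  apply hnint
  -- q is in the open cube, which is open and contained in triCube
  have hopen : IsOpen {x : EuclideanSpace ℝ (Fin d) | ∀ i, z i - 3 ^ k / 2 < x i ∧ x i < z i + 3 ^ k / 2} := by
    have : {x : EuclideanSpace ℝ (Fin d) | ∀ i, z i - 3 ^ k / 2 < x i ∧ x i < z i + 3 ^ k / 2}
        = ⋂ i, (EuclideanSpace.proj (𝕜 := ℝ) i) ⁻¹' (Set.Ioo (z i - 3 ^ k / 2) (z i + 3 ^ k / 2)) := by
      ext x; simp [Set.mem_iInter]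
    rw [this]
    exact isOpen_iInter_of_finite fun i => IsOpen.preimage (EuclideanSpace.proj i).continuous isOpen_Ioo
  have hsub : {x : EuclideanSpace ℝ (Fin d) | ∀ i, z i - 3 ^ k / 2 < x i ∧ x i < z i + 3 ^ k / 2} ⊆ triCube d k z :=
    fun x hx i => ⟨(hx i).1.le, (hx i).2⟩
  apply interior_maximal hsub hopen
  intro i
  obtain ⟨h1, h2⟩ := hclosed i
  obtain ⟨h3, h4⟩ := hcon i
  exact ⟨lt_of_le_of_ne h1 (Ne.symm h3), lt_of_le_of_ne h2 h4⟩

lemma coord_le_dist (x y : EuclideanSpace ℝ (Fin d)) (i : Fin d) : |x i - y i| ≤ dist x y := by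
  rw [← Real.dist_eq, EuclideanSpace.dist_eq]
  have h : dist (x i) (y i) = Real.sqrt (dist (x i) (y i) ^ 2) := by
    rw [Real.sqrt_sq dist_nonneg]
  rw [h]
  apply Real.sqrt_le_sqrt
  exact Finset.single_le_sum (f := fun j => dist (x j) (y j) ^ 2)
    (fun j _ => by positivity) (Finset.mem_univ i)

lemma norm_sq_eq (x : EuclideanSpace ℝ (Fin d)) : ‖x‖ ^ 2 = ∑ i, (x i) ^ 2 := by
  rw [EuclideanSpace.norm_eq, Real.sq_sqrt (by positivity)]
  congr 1; funext i; rw [Real.norm_eq_abs, sq_abs]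

lemma dist_sq_eq (x y : EuclideanSpace ℝ (Fin d)) : (dist x y) ^ 2 = ∑ i, (x i - y i) ^ 2 := by
  rw [EuclideanSpace.dist_eq, Real.sq_sqrt (by positivity)]
  congr 1; funext i; rw [Real.dist_eq, sq_abs]

lemma lp_bound (p x y : EuclideanSpace ℝ (Fin d)) (h : dist x y ≤ 1) :
    ((∑ i, p i * x i) - ∑ i, p i * y i) ^ 2 ≤ ‖p‖ ^ 2 := by
  have h1 : ((∑ i, p i * x i) - ∑ i, p i * y i) = ∑ i, p i * (x i - y i) := by
    rw [← Finset.sum_sub_distrib]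
    exact Finset.sum_congr rfl fun i _ => by ring
  rw [h1]
  have h2 := Finset.sum_mul_sq_le_sq_mul_sq Finset.univ p (fun i => x i - y i)
  have h3 : (∑ i, (x i - y i) ^ 2) = (dist x y) ^ 2 := (dist_sq_eq x y).symm
  have h4 : (dist x y) ^ 2 ≤ 1 := by
    nlinarith [dist_nonneg (x := x) (y := y)]
  have h5 : (∑ i, (p i) ^ 2) = ‖p‖ ^ 2 := (norm_sq_eq p).symm
  calc (∑ i, p i * (x i - y i)) ^ 2 ≤ (∑ i, (p i) ^ 2) * (∑ i, (x i - y i) ^ 2) := h2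
    _ = ‖p‖ ^ 2 * (dist x y) ^ 2 := by rw [h3, h5]
    _ ≤ ‖p‖ ^ 2 * 1 := by nlinarith [sq_nonneg ‖p‖]
    _ = ‖p‖ ^ 2 := by ring

lemma mem_triCube_iff {k : ℕ} (a : Fin d → ℤ) (x : EuclideanSpace ℝ (Fin d)) :
    x ∈ triCube d k (WithLp.toLp 2 (fun i => (3:ℝ) ^ k * (a i : ℝ))) ↔ ∀ i, rd k (x i) = a i := by
  constructor
  · intro h i
    exact rd_eq_iff.mpr (h i)
  · intro h i
    exact rd_eq_iff.mp (h i)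

/-- case analysis for a crossing edge -/
lemma cross_cases {n : ℕ} (x y : EuclideanSpace ℝ (Fin d)) (i : Fin d)
    (h1 : |x i - y i| ≤ 1) (hne : rd n (x i) ≠ rd n (y i)) :
    (3:ℝ) ^ n * (rd n (x i) : ℝ) + 3 ^ n / 2 - 1 ≤ x i ∨
    x i < (3:ℝ) ^ n * (rd n (x i) : ℝ) - 3 ^ n / 2 + 1 := by
  obtain ⟨hx1, hx2⟩ := rd_bounds n (x i)
  have habs1 : x i - y i ≤ 1 := le_trans (le_abs_self _) h1
  have habs2 : y i - x i ≤ 1 := by linarith [neg_le_abs (x i - y i), h1]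
  by_cases hcase : y i < (3:ℝ) ^ n * (rd n (x i) : ℝ) - 3 ^ n / 2
  · right; linarith
  · push_neg at hcase
    have hhi : (3:ℝ) ^ n * (rd n (x i) : ℝ) + 3 ^ n / 2 ≤ y i := by
      by_contra hcon
      push_neg at hcon
      exact hne.symm (rd_eq_iff.mpr ⟨hcase, hcon⟩)
    left; linarith

lemma cross_bprop {n : ℕ} (x y : EuclideanSpace ℝ (Fin d))
    (hdist : ∀ i, |x i - y i| ≤ 1) (hA : ∃ i, rd n (x i) ≠ rd n (y i)) :
    ∃ i, (3:ℝ) ^ n / 2 - 1 ≤ |x i - 3 ^ n * (rd n (x i) : ℝ)| := by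
  obtain ⟨i, hi⟩ := hA
  refine ⟨i, ?_⟩
  rcases cross_cases x y i (hdist i) hi with h | h
  · exact le_trans (by linarith) (le_abs_self _)
  · exact le_trans (by linarith) (neg_le_abs _)

/-- Key geometric lemma: a point with a crossing neighbour is in the thickened
boundary of its own subcube. -/
lemma cross_mem_thickBdry {l n : ℕ} (hln : l ≤ n) (x y : EuclideanSpace ℝ (Fin d))
    (hdist : ∀ i, |x i - y i| ≤ 1) (hA : ∃ i, rd n (x i) ≠ rd n (y i)) :
    x ∈ thickBdry d l n (WithLp.toLp 2 (fun i => (3:ℝ) ^ n * (rd n (x i) : ℝ))) := by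
  obtain ⟨i, hi⟩ := hA
  have hL : (0:ℝ) < 3 ^ l := by positivity
  set z : EuclideanSpace ℝ (Fin d) := WithLp.toLp 2 (fun j => (3:ℝ) ^ n * (rd n (x j) : ℝ)) with hzdef
  set z' : EuclideanSpace ℝ (Fin d) := WithLp.toLp 2 (fun j => (3:ℝ) ^ l * (rd l (x j) : ℝ)) with hz'def
  have hz'j : ∀ j, z' j = (3:ℝ) ^ l * (rd l (x j) : ℝ) := fun j => rfl
  have hzj : ∀ j, z j = (3:ℝ) ^ n * (rd n (x j) : ℝ) := fun j => rfl
  have hlat : isLatticePt d l z' := fun j => ⟨rd l (x j), rfl⟩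
  have hz'mem : z' ∈ triCube d n z := by
    intro j
    obtain ⟨h1, h2⟩ := nest hln (x j)
    rw [hz'j, hzj]
    constructor
    · linarith
    · linarith
  have hxmem : x ∈ triCube d l z' := by
    intro j
    rw [hz'j]
    exact rd_bounds l (x j)
  -- construct the frontier witness
  rcases cross_cases x y i (hdist i) hi with hcase | hcase
  · -- top face
    set v : ℝ := (3:ℝ) ^ n * (rd n (x i) : ℝ) + 3 ^ n / 2 with hvdef
    have htop : (3:ℝ) ^ l * (rd l (x i) : ℝ) + 3 ^ l / 2 = v := nest_top hln (x i) hcase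
    set q : EuclideanSpace ℝ (Fin d) := WithLp.toLp 2 (Function.update (WithLp.ofLp x) i v) with hqdef
    have hqi : q i = v := Function.update_self i v (WithLp.ofLp x)
    have hqj : ∀ j, j ≠ i → q j = x j := fun j hj => Function.update_of_ne hj v (WithLp.ofLp x)
    have hqcl : q ∈ closure (triCube d l z') := by
      apply closed_subset_closure (d := d) l z' q
      intro j
      by_cases hji : j = i
      · subst hji
        rw [hqi, hz'j, ← htop]
        constructor <;> linarith
      · rw [hqj j hji, hz'j]
        obtain ⟨h1, h2⟩ := rd_bounds l (x j)
        exact ⟨h1, h2.le⟩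
    have hqfr : q ∈ frontier (triCube d n z) := by
      apply mem_frontier_of (d := d) n z q
      · intro j
        by_cases hji : j = i
        · subst hji
          rw [hqi, hzj]
          have h3 : (0:ℝ) < 3 ^ n := by positivity
          constructor <;> [linarith; linarith]
        · rw [hqj j hji, hzj]
          obtain ⟨h1, h2⟩ := rd_bounds n (x j)
          exact ⟨h1, h2.le⟩
      · exact ⟨i, Or.inr (by rw [hqi, hzj])⟩
    simp only [thickBdry, Set.mem_iUnion, Set.mem_setOf_eq, exists_prop]
    exact ⟨z', ⟨hlat, hz'mem, ⟨q, hqcl, hqfr⟩⟩, hxmem⟩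
  · -- bottom face
    set v : ℝ := (3:ℝ) ^ n * (rd n (x i) : ℝ) - 3 ^ n / 2 with hvdef
    have hbot : (3:ℝ) ^ l * (rd l (x i) : ℝ) - 3 ^ l / 2 = v := nest_bot hln (x i) hcase
    set q : EuclideanSpace ℝ (Fin d) := WithLp.toLp 2 (Function.update (WithLp.ofLp x) i v) with hqdef
    have hqi : q i = v := Function.update_self i v (WithLp.ofLp x)
    have hqj : ∀ j, j ≠ i → q j = x j := fun j hj => Function.update_of_ne hj v (WithLp.ofLp x)
    have hqcl : q ∈ closure (triCube d l z') := by
      apply closed_subset_closure (d := d) l z' q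
      intro j
      by_cases hji : j = i
      · subst hji
        rw [hqi, hz'j, ← hbot]
        constructor <;> linarith
      · rw [hqj j hji, hz'j]
        obtain ⟨h1, h2⟩ := rd_bounds l (x j)
        exact ⟨h1, h2.le⟩
    have hqfr : q ∈ frontier (triCube d n z) := by
      apply mem_frontier_of (d := d) n z q
      · intro j
        by_cases hji : j = i
        · subst hji
          rw [hqi, hzj]
          have h3 : (0:ℝ) < 3 ^ n := by positivity
          constructor <;> [linarith; linarith]
        · rw [hqj j hji, hzj]
          obtain ⟨h1, h2⟩ := rd_bounds n (x j)
          exact ⟨h1, h2.le⟩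
      · exact ⟨i, Or.inl (by rw [hqi, hzj])⟩
    simp only [thickBdry, Set.mem_iUnion, Set.mem_setOf_eq, exists_prop]
    exact ⟨z', ⟨hlat, hz'mem, ⟨q, hqcl, hqfr⟩⟩, hxmem⟩

/-- A point of the thickened boundary of the big cube is in the thickened boundary
of its subcube. -/
lemma bigBdry_mem_thickBdry {l n m : ℕ} (hln : l ≤ n) (hnm : n ≤ m)
    (x : EuclideanSpace ℝ (Fin d)) (hxm : x ∈ triCube d m 0)
    (hx : x ∈ thickBdry d l m 0) :
    x ∈ thickBdry d l n (WithLp.toLp 2 (fun i => (3:ℝ) ^ n * (rd n (x i) : ℝ))) := by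
  simp only [thickBdry, Set.mem_iUnion, Set.mem_setOf_eq, exists_prop] at hx
  obtain ⟨z', ⟨hlat, hz'm, ⟨q, hqcl, hqfr⟩⟩, hxz'⟩ := hx
  have h0 : ∀ j, (0 : EuclideanSpace ℝ (Fin d)) j = 0 := fun j => rfl
  -- identify z' as the l-cube of x
  have hz'eq : z' = WithLp.toLp 2 (fun j => (3:ℝ) ^ l * (rd l (x j) : ℝ)) := by
    apply PiLp.ext; intro j
    show z' j = (3:ℝ) ^ l * (rd l (x j) : ℝ)
    obtain ⟨c, hc⟩ := hlat j
    have hxj := hxz' j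
    rw [hc] at hxj ⊢
    have : rd l (x j) = c := rd_eq_iff.mpr hxj
    rw [this]
  set z : EuclideanSpace ℝ (Fin d) := WithLp.toLp 2 (fun j => (3:ℝ) ^ n * (rd n (x j) : ℝ)) with hzdef
  have hzj : ∀ j, z j = (3:ℝ) ^ n * (rd n (x j) : ℝ) := fun j => rfl
  have hz'j : ∀ j, z' j = (3:ℝ) ^ l * (rd l (x j) : ℝ) := fun j => congrArg (fun w : EuclideanSpace ℝ (Fin d) => w j) hz'eq
  have hL : (0:ℝ) < 3 ^ l := by positivity
  have hz'mem : z' ∈ triCube d n z := by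
    intro j
    obtain ⟨h1, h2⟩ := nest hln (x j)
    rw [hz'j, hzj]
    constructor <;> linarith
  -- rd m (x j) = 0
  have hrdm : ∀ j, rd m (x j) = 0 := by
    intro j
    apply rd_eq_iff.mpr
    obtain ⟨h1, h2⟩ := hxm j
    rw [h0 j] at h1 h2
    push_cast
    constructor <;> linarith
  obtain ⟨hqc, ⟨i, hqi⟩⟩ := frontier_char (d := d) m 0 q hqfr
  have hql : ∀ j, z' j - 3 ^ l / 2 ≤ q j ∧ q j ≤ z' j + 3 ^ l / 2 :=
    fun j => closure_subset_closed (d := d) l z' hqcl j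
  have hqfr' : q ∈ frontier (triCube d n z) := by
    apply mem_frontier_of (d := d) n z q
    · intro j
      obtain ⟨h1, h2⟩ := nest hln (x j)
      obtain ⟨h3, h4⟩ := hql j
      rw [hz'j] at h3 h4
      rw [hzj]
      constructor <;> linarith
    · refine ⟨i, ?_⟩
      obtain ⟨h3, h4⟩ := hql i
      rw [hz'j] at h3 h4
      have hchainup := (nest hln (x i)).2
      have hchaindn := (nest hln (x i)).1
      have hup2 := (nest hnm (x i)).2
      have hdn2 := (nest hnm (x i)).1
      rw [hrdm i] at hup2 hdn2
      push_cast at hup2 hdn2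
      rcases hqi with h | h
      · left
        rw [h0 i] at h
        rw [hzj]
        -- q i = -3^m/2; chain forces equality
        linarith
      · right
        rw [h0 i] at h
        rw [hzj]
        linarith
  simp only [thickBdry, Set.mem_iUnion, Set.mem_setOf_eq, exists_prop]
  exact ⟨z', ⟨hlat, hz'mem, ⟨q, hqcl, hqfr'⟩⟩, hxz'⟩

/-- range of the subcube index of a point of the big cube -/
lemma rd_range {n m : ℕ} (hnm : n ≤ m) (t : ℝ)
    (h1 : -((3:ℝ) ^ m / 2) ≤ t) (h2 : t < 3 ^ m / 2) :
    -(((3:ℤ) ^ (m - n) - 1) / 2) ≤ rd n t ∧ rd n t ≤ ((3:ℤ) ^ (m - n) - 1) / 2 := by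
  set h' : ℤ := ((3:ℤ) ^ (m - n) - 1) / 2 with hh'def
  have hodd : Odd ((3:ℤ) ^ (m - n)) := Odd.pow (by decide)
  have h2h : 2 * h' + 1 = 3 ^ (m - n) := by
    obtain ⟨c, hc⟩ := hodd; omega
  have hr : (3:ℝ) ^ n * (2 * (h' : ℝ) + 1) = 3 ^ m := by
    have hcast : (2 * (h' : ℝ) + 1) = (3:ℝ) ^ (m - n) := by exact_mod_cast h2h
    rw [hcast, ← pow_add]
    congr 1
    omega
  obtain ⟨ha1, ha2⟩ := rd_bounds n t
  have hN : (0:ℝ) < 3 ^ n := by positivity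
  constructor
  · by_contra hc
    push_neg at hc
    have hcR : (rd n t : ℝ) ≤ -(h':ℝ) - 1 := by
      have : rd n t ≤ -h' - 1 := by omega
      exact_mod_cast this
    have := mul_le_mul_of_nonneg_left hcR hN.le
    linarith
  · by_contra hc
    push_neg at hc
    have hcR : (h':ℝ) + 1 ≤ (rd n t : ℝ) := by
      have : h' + 1 ≤ rd n t := by omega
      exact_mod_cast this
    have := mul_le_mul_of_nonneg_left hcR hN.le
    linarith

/-- neighbour count -/
lemma neighbor_card (W : Finset (EuclideanSpace ℝ (Fin d))) (P : ℝ)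
    (hP : ∀ z : EuclideanSpace ℝ (Fin d),
      ((W.filter (fun x => ∀ i, z i ≤ x i ∧ x i ≤ z i + 1)).card : ℝ) ≤ P)
    (x : EuclideanSpace ℝ (Fin d)) :
    ((W.filter (fun y => dist x y ≤ 1)).card : ℝ) ≤ 2 ^ d * P := by
  classical
  set zs : (Fin d → Bool) → EuclideanSpace ℝ (Fin d) :=
    fun s => WithLp.toLp 2 (fun i => x i - 1 + (if s i then 1 else 0)) with hzs
  have hsub : W.filter (fun y => dist x y ≤ 1) ⊆
      (Finset.univ : Finset (Fin d → Bool)).biUnion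
        (fun s => W.filter (fun y => ∀ i, zs s i ≤ y i ∧ y i ≤ zs s i + 1)) := by
    intro y hy
    rw [Finset.mem_filter] at hy
    obtain ⟨hyW, hyd⟩ := hy
    rw [Finset.mem_biUnion]
    refine ⟨fun i => decide (x i ≤ y i), Finset.mem_univ _, ?_⟩
    rw [Finset.mem_filter]
    refine ⟨hyW, fun i => ?_⟩
    have hco : |x i - y i| ≤ 1 := le_trans (coord_le_dist x y i) hyd
    have hco1 : x i - y i ≤ 1 := le_trans (le_abs_self _) hco
    have hco2 : y i - x i ≤ 1 := by linarith [neg_le_abs (x i - y i), hco]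
    by_cases hxy : x i ≤ y i
    · have hz : zs (fun i => decide (x i ≤ y i)) i = x i := by
        simp only [hzs, decide_eq_true hxy]
        norm_num
      rw [hz]
      constructor <;> linarith
    · have hz : zs (fun i => decide (x i ≤ y i)) i = x i - 1 := by
        simp only [hzs, decide_eq_false hxy]
        norm_num
      rw [hz]
      push_neg at hxy
      constructor <;> linarith
  have hcard := Finset.card_le_card hsub
  have hcard2 := Finset.card_biUnion_le (s := (Finset.univ : Finset (Fin d → Bool)))
    (t := fun s => W.filter (fun y => ∀ i, zs s i ≤ y i ∧ y i ≤ zs s i + 1))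
  have hchain : ((W.filter (fun y => dist x y ≤ 1)).card : ℝ)
      ≤ ∑ s : Fin d → Bool, ((W.filter (fun y => ∀ i, zs s i ≤ y i ∧ y i ≤ zs s i + 1)).card : ℝ) := by
    push_cast
    exact_mod_cast le_trans (Nat.cast_le.mpr hcard) (Nat.cast_le.mpr hcard2)
  refine le_trans hchain ?_
  have hbound : ∀ s : Fin d → Bool,
      ((W.filter (fun y => ∀ i, zs s i ≤ y i ∧ y i ≤ zs s i + 1)).card : ℝ) ≤ P :=
    fun s => hP (zs s)
  calc ∑ s : Fin d → Bool, ((W.filter (fun y => ∀ i, zs s i ≤ y i ∧ y i ≤ zs s i + 1)).card : ℝ)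
      ≤ ∑ _s : Fin d → Bool, P := Finset.sum_le_sum (fun s _ => hbound s)
    _ = (Fintype.card (Fin d → Bool) : ℝ) * P := by
        rw [Finset.sum_const, Finset.card_univ, nsmul_eq_mul]
    _ = 2 ^ d * P := by
        rw [Fintype.card_fun]
        norm_num

/-- slab count -/
lemma slab_card {n m : ℕ} (hn : 1 ≤ n) (hnm : n ≤ m)
    (W : Finset (EuclideanSpace ℝ (Fin d)))
    (hW : ∀ x ∈ W, x ∈ triCube d m 0) (P : ℝ)
    (hP : ∀ z : EuclideanSpace ℝ (Fin d),
      ((W.filter (fun x => ∀ i, z i ≤ x i ∧ x i ≤ z i + 1)).card : ℝ) ≤ P)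
    (i : Fin d) :
    ((W.filter (fun x => (3:ℝ) ^ n / 2 - 1 ≤ |x i - 3 ^ n * (rd n (x i) : ℝ)|)).card : ℝ)
      ≤ P * (2 * ((3:ℝ) ^ (m - n) + 1) * 3 ^ (m * (d - 1))) := by
  classical
  set h' : ℤ := ((3:ℤ) ^ (m - n) - 1) / 2 with hh'def
  have hodd : Odd ((3:ℤ) ^ (m - n)) := Odd.pow (by decide)
  have h2h : 2 * h' + 1 = 3 ^ (m - n) := by obtain ⟨c, hc⟩ := hodd; omega
  have hh'0 : 0 ≤ h' := by
    have : (1:ℤ) ≤ 3 ^ (m - n) := one_le_pow₀ (by norm_num)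
    omega
  set T : Finset (ℤ × Bool × (Fin d → ℕ)) :=
    (Finset.Icc (-h' - 1) h') ×ˢ (Finset.univ : Finset Bool) ×ˢ
      (Fintype.piFinset (fun j => if j = i then ({0} : Finset ℕ) else Finset.range (3 ^ m)))
    with hTdef
  set corner : ℤ × Bool × (Fin d → ℕ) → EuclideanSpace ℝ (Fin d) :=
    fun t => WithLp.toLp 2 (fun j => if j = i then ((3:ℝ) ^ n * ((t.1 : ℝ) + 1/2) - 1 + (if t.2.1 then 1 else 0))
      else (-(3:ℝ) ^ m / 2 + (t.2.2 j : ℝ))) with hcorner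
  have hsub : W.filter (fun x => (3:ℝ) ^ n / 2 - 1 ≤ |x i - 3 ^ n * (rd n (x i) : ℝ)|) ⊆
      T.biUnion (fun t => W.filter (fun x => ∀ j, corner t j ≤ x j ∧ x j ≤ corner t j + 1)) := by
    intro x hx
    rw [Finset.mem_filter] at hx
    obtain ⟨hxW, hxslab⟩ := hx
    have hxm := hW x hxW
    have hxm' : ∀ j, -((3:ℝ) ^ m / 2) ≤ x j ∧ x j < 3 ^ m / 2 := by
      intro j
      obtain ⟨h1, h2⟩ := hxm j
      have h0 : (0 : EuclideanSpace ℝ (Fin d)) j = 0 := rfl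
      rw [h0] at h1 h2
      constructor <;> linarith
    set a : ℤ := rd n (x i) with hadef
    set g : ℝ := x i - 3 ^ n * (a : ℝ) with hgdef
    obtain ⟨hb1, hb2⟩ := rd_bounds n (x i)
    obtain ⟨hra1, hra2⟩ := rd_range hnm (x i) (hxm' i).1 (hxm' i).2
    have hN1 : (1:ℝ) ≤ 3 ^ n / 2 := by
      have : (3:ℝ) ^ 1 ≤ 3 ^ n := pow_le_pow_right₀ (by norm_num) hn
      norm_num at this ⊢
      linarith
    set f : Fin d → ℕ := fun j => if j = i then 0 else (⌊x j + 3 ^ m / 2⌋).toNat with hfdef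
    have hfmem : f ∈ Fintype.piFinset (fun j => if j = i then ({0} : Finset ℕ) else Finset.range (3 ^ m)) := by
      rw [Fintype.mem_piFinset]
      intro j
      by_cases hji : j = i
      · simp [hfdef, hji]
      · rw [if_neg hji, Finset.mem_range]
        have hf1 : (0:ℤ) ≤ ⌊x j + 3 ^ m / 2⌋ := Int.floor_nonneg.mpr (by linarith [(hxm' j).1])
        have hf2 : ⌊x j + 3 ^ m / 2⌋ < ((3 ^ m : ℕ) : ℤ) := by
          apply Int.floor_lt.mpr
          push_cast
          linarith [(hxm' j).2]
        have hfval : f j = (⌊x j + 3 ^ m / 2⌋).toNat := by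
          simp only [hfdef]
          exact if_neg hji
        rw [hfval]
        omega
    have hfj : ∀ j, j ≠ i → ((f j : ℝ)) = (⌊x j + 3 ^ m / 2⌋ : ℝ) := by
      intro j hji
      have hf1 : (0:ℤ) ≤ ⌊x j + 3 ^ m / 2⌋ := Int.floor_nonneg.mpr (by linarith [(hxm' j).1])
      simp only [hfdef, if_neg hji]
      rw [← Int.cast_natCast, Int.toNat_of_nonneg hf1]
    rw [Finset.mem_biUnion]
    by_cases hg : 0 ≤ g
    · have hgabs : g ≥ 3 ^ n / 2 - 1 := by
        rw [abs_of_nonneg hg] at hxslab; linarith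
      refine ⟨(a, false, f), ?_, ?_⟩
      · rw [hTdef, Finset.mem_product]
        refine ⟨?_, ?_⟩
        · rw [Finset.mem_Icc]; omega
        · rw [Finset.mem_product]
          exact ⟨Finset.mem_univ _, hfmem⟩
      · rw [Finset.mem_filter]
        refine ⟨hxW, fun j => ?_⟩
        by_cases hji : j = i
        · subst hji
          have hc : corner (a, false, f) j = (3:ℝ) ^ n * ((a : ℝ) + 1/2) - 1 := by
            simp [hcorner]
          rw [hc]
          constructor
          · linarith [hgabs]
          · linarith [hb2]
        · have hc : corner (a, false, f) j = -(3:ℝ) ^ m / 2 + (f j : ℝ) := by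
            simp [hcorner, hji]
          rw [hc, hfj j hji]
          have hfl := Int.floor_le (x j + 3 ^ m / 2)
          have hfl2 := Int.lt_floor_add_one (x j + 3 ^ m / 2)
          constructor <;> linarith
    · push_neg at hg
      have hgabs : -g ≥ 3 ^ n / 2 - 1 := by
        rw [abs_of_neg hg] at hxslab; linarith
      refine ⟨(a - 1, true, f), ?_, ?_⟩
      · rw [hTdef, Finset.mem_product]
        refine ⟨?_, ?_⟩
        · rw [Finset.mem_Icc]; omega
        · rw [Finset.mem_product]
          exact ⟨Finset.mem_univ _, hfmem⟩
      · rw [Finset.mem_filter]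
        refine ⟨hxW, fun j => ?_⟩
        by_cases hji : j = i
        · subst hji
          have hc : corner (a - 1, true, f) j = (3:ℝ) ^ n * (((a:ℝ) - 1) + 1/2) - 1 + 1 := by
            simp [hcorner]
          rw [hc]
          constructor
          · linarith [hb1]
          · linarith [hgabs]
        · have hc : corner (a - 1, true, f) j = -(3:ℝ) ^ m / 2 + (f j : ℝ) := by
            simp [hcorner, hji]
          rw [hc, hfj j hji]
          have hfl := Int.floor_le (x j + 3 ^ m / 2)
          have hfl2 := Int.lt_floor_add_one (x j + 3 ^ m / 2)
          constructor <;> linarith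
  -- cardinality of T
  have hTcard : ((T.card : ℝ)) ≤ 2 * ((3:ℝ) ^ (m - n) + 1) * 3 ^ (m * (d - 1)) := by
    have hIcc : (Finset.Icc (-h' - 1) h').card = (2 * h' + 2).toNat := by
      rw [Int.card_Icc]
      congr 1
      omega
    have hpi : (Fintype.piFinset (fun j => if j = i then ({0} : Finset ℕ) else Finset.range (3 ^ m))).card
        = (3 ^ m) ^ (d - 1) := by
      rw [Fintype.card_piFinset]
      rw [Finset.prod_eq_mul_prod_sdiff_singleton_of_mem (Finset.mem_univ i)
        (fun j => (if j = i then ({0} : Finset ℕ) else Finset.range (3 ^ m)).card)]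
      have h1 : (if i = i then ({0} : Finset ℕ) else Finset.range (3 ^ m)).card = 1 := by simp
      rw [h1, one_mul]
      have h2 : ∀ j ∈ Finset.univ \ {i}, (if j = i then ({0} : Finset ℕ) else Finset.range (3 ^ m)).card = 3 ^ m := by
        intro j hj
        rw [Finset.mem_sdiff, Finset.mem_singleton] at hj
        rw [if_neg hj.2, Finset.card_range]
      rw [Finset.prod_congr rfl h2, Finset.prod_const]
      congr 1
      rw [Finset.card_sdiff_of_subset (by simp), Finset.card_univ, Finset.card_singleton, Fintype.card_fin]
    have hc1 : (((2 * h' + 2).toNat : ℕ) : ℝ) = 2 * (h':ℝ) + 2 := by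
      have h3 : ((2 * h' + 2).toNat : ℤ) = 2 * h' + 2 := Int.toNat_of_nonneg (by omega)
      exact_mod_cast h3
    have hc2 : (2 * (h':ℝ) + 1) = (3:ℝ) ^ (m - n) := by exact_mod_cast h2h
    have hcpow : (((3 ^ m : ℕ) ^ (d - 1) : ℕ) : ℝ) = (3:ℝ) ^ (m * (d - 1)) := by
      push_cast
      rw [← pow_mul]
    have hcard : (T.card : ℝ) = (2 * (h':ℝ) + 2) * 2 * (3:ℝ) ^ (m * (d - 1)) := by
      rw [hTdef, Finset.card_product, Finset.card_product, hIcc, hpi]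
      have hbool : ((Finset.univ : Finset Bool).card) = 2 := by
        rw [Finset.card_univ]; exact Fintype.card_bool
      rw [hbool]
      push_cast
      rw [← hcpow, hc1]
      push_cast
      ring
    rw [hcard]
    nlinarith [hc2, pow_pos (by norm_num : (0:ℝ) < 3) (m * (d - 1))]
  have hchain : ((W.filter (fun x => (3:ℝ) ^ n / 2 - 1 ≤ |x i - 3 ^ n * (rd n (x i) : ℝ)|)).card : ℝ)
      ≤ ∑ t ∈ T, ((W.filter (fun x => ∀ j, corner t j ≤ x j ∧ x j ≤ corner t j + 1)).card : ℝ) := by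
    have h1 := Finset.card_le_card hsub
    have h2 := Finset.card_biUnion_le (s := T)
      (t := fun t => W.filter (fun x => ∀ j, corner t j ≤ x j ∧ x j ≤ corner t j + 1))
    push_cast
    exact_mod_cast le_trans (Nat.cast_le.mpr h1) (Nat.cast_le.mpr h2)
  have hP0 : 0 ≤ P := le_trans (Nat.cast_nonneg _) (hP 0)
  calc ((W.filter (fun x => (3:ℝ) ^ n / 2 - 1 ≤ |x i - 3 ^ n * (rd n (x i) : ℝ)|)).card : ℝ)
      ≤ ∑ t ∈ T, ((W.filter (fun x => ∀ j, corner t j ≤ x j ∧ x j ≤ corner t j + 1)).card : ℝ) := hchain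
    _ ≤ ∑ _t ∈ T, P := Finset.sum_le_sum (fun t _ => hP (corner t))
    _ = (T.card : ℝ) * P := by rw [Finset.sum_const, nsmul_eq_mul]
    _ ≤ (2 * ((3:ℝ) ^ (m - n) + 1) * 3 ^ (m * (d - 1))) * P := by
        apply mul_le_mul_of_nonneg_right hTcard hP0
    _ = P * (2 * ((3:ℝ) ^ (m - n) + 1) * 3 ^ (m * (d - 1))) := by ring

end AppSub

open AppSub in
set_option maxHeartbeats 4000000 in
/-- Approximate subadditivity of the Dirichlet quantity (Lemma 3.7, inequality (3.2)). -/
theorem approximate_subadditivity (d : ℕ) (hd : 2 ≤ d) :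
    ∃ C : ℝ, 0 < C ∧
      ∀ l n m : ℕ, l < n → n < m →
      ∀ W : Finset (EuclideanSpace ℝ (Fin d)),
        (↑W : Set (EuclideanSpace ℝ (Fin d))) ⊆ triCube d m 0 →
      ∀ P : ℝ, (∀ z : EuclideanSpace ℝ (Fin d),
          ((W.filter (fun x => ∀ i, z i ≤ x i ∧ x i ≤ z i + 1)).card : ℝ) ≤ P) →
      ∀ p : EuclideanSpace ℝ (Fin d),
        muCG d W l m 0 p
          ≤ ((3 : ℝ) ^ (d * (m - n)))⁻¹ *
              ∑ a ∈ Fintype.piFinset (fun _ : Fin d =>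
                  Finset.Icc (-(((3 : ℤ) ^ (m - n) - 1) / 2)) (((3 : ℤ) ^ (m - n) - 1) / 2)),
                muCG d W l n (WithLp.toLp 2 (fun i => (3 : ℝ) ^ n * (a i : ℝ))) p
            + C * P ^ 2 * ‖p‖ ^ 2 * ((3 : ℝ) ^ (n - l))⁻¹ := by
  classical
  have hd0 : (0:ℝ) < (d:ℝ) := by exact_mod_cast (by omega : 0 < d)
  refine ⟨2 ^ (d + 1) * d, mul_pos (by positivity) hd0, ?_⟩
  intro l n m hln hnm W hW P hP p
  have hWm : ∀ x ∈ W, x ∈ triCube d m 0 := fun x hx => hW (Finset.mem_coe.mpr hx)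
  have hP0 : (0:ℝ) ≤ P := le_trans (Nat.cast_nonneg _) (hP 0)
  set Lp : EuclideanSpace ℝ (Fin d) → ℝ := fun x => ∑ i, p i * x i with hLp
  set za : (Fin d → ℤ) → EuclideanSpace ℝ (Fin d) :=
    fun a => WithLp.toLp 2 (fun i => (3:ℝ) ^ n * (a i : ℝ)) with hza
  set A : EuclideanSpace ℝ (Fin d) → (Fin d → ℤ) := fun x => (fun i => rd n (x i)) with hA
  set I := Fintype.piFinset (fun _ : Fin d =>
      Finset.Icc (-(((3 : ℤ) ^ (m - n) - 1) / 2)) (((3 : ℤ) ^ (m - n) - 1) / 2)) with hI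
  apply le_of_forall_pos_le_add
  intro δ hδ
  have hIcard1 : (0:ℝ) < (I.card : ℝ) + 1 := by positivity
  set ε := δ * 3 ^ (d * m) / ((I.card : ℝ) + 1) with hε
  have hεpos : 0 < ε := div_pos (mul_pos hδ (by positivity)) hIcard1
  -- choose near-minimizers on all subcubes
  have hne : ∀ a : Fin d → ℤ, (cubeEnergies d W l n (za a) p).Nonempty :=
    fun a => ⟨_, Lp, fun x _ _ => rfl, rfl⟩
  have hpick : ∀ a : Fin d → ℤ, ∃ uu : EuclideanSpace ℝ (Fin d) → ℝ,
      (∀ x ∈ W, x ∈ thickBdry d l n (za a) → uu x = Lp x) ∧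
      (∑ x ∈ W.filter (· ∈ triCube d n (za a)),
        ∑ y ∈ (W.filter (· ∈ triCube d n (za a))).filter (fun y => y ≠ x ∧ dist x y ≤ 1),
          (1/2) * (uu x - uu y)^2)
        < sInf (cubeEnergies d W l n (za a) p) + ε := by
    intro a
    obtain ⟨Ev, hEmem, hElt⟩ := Real.lt_sInf_add_pos (hne a) hεpos
    obtain ⟨uu, hu1, hu2⟩ := hEmem
    exact ⟨uu, hu1, by rw [← hu2]; exact hElt⟩
  choose u hu1 hu2 using hpick
  set U : EuclideanSpace ℝ (Fin d) → ℝ := fun x => u (A x) x with hU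
  set S := W.filter (· ∈ triCube d m 0) with hS
  have hSW : S = W := Finset.filter_true_of_mem (fun x hx => hWm x hx)
  set EU := ∑ x ∈ S, ∑ y ∈ S.filter (fun y => y ≠ x ∧ dist x y ≤ 1),
      (1/2) * (U x - U y)^2 with hEU
  -- U is admissible on the big cube
  have hbc : ∀ x ∈ W, x ∈ thickBdry d l m 0 → U x = ∑ i, p i * x i := by
    intro x hxW hxB
    have hmem := bigBdry_mem_thickBdry hln.le hnm.le x (hWm x hxW) hxB
    exact hu1 (A x) x hxW hmem
  have hEUmem : EU ∈ cubeEnergies d W l m 0 p := ⟨U, hbc, hEU⟩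
  have hbdd : BddBelow (cubeEnergies d W l m 0 p) := by
    refine ⟨0, ?_⟩
    rintro E ⟨v, hv1, rfl⟩
    apply Finset.sum_nonneg
    intro x hx
    apply Finset.sum_nonneg
    intro y hy
    positivity
  have hmu : muCG d W l m 0 p ≤ ((3:ℝ) ^ (d * m))⁻¹ * EU := by
    have h1 : muCG d W l m 0 p = ((3:ℝ) ^ (d * m))⁻¹ * sInf (cubeEnergies d W l m 0 p) := rfl
    rw [h1]
    exact mul_le_mul_of_nonneg_left (csInf_le hbdd hEUmem) (by positivity)
  -- split EU into same-cube and cross-cube parts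
  set sameSum := ∑ x ∈ S, ∑ y ∈ (S.filter (fun y => y ≠ x ∧ dist x y ≤ 1)).filter
      (fun y => A y = A x), (1/2) * (U x - U y)^2 with hsameSum
  set diffSum := ∑ x ∈ S, ∑ y ∈ (S.filter (fun y => y ≠ x ∧ dist x y ≤ 1)).filter
      (fun y => ¬ A y = A x), (1/2) * (U x - U y)^2 with hdiffSum
  have hsplit : EU = sameSum + diffSum := by
    rw [hEU, hsameSum, hdiffSum, ← Finset.sum_add_distrib]
    apply Finset.sum_congr rfl
    intro x hx
    rw [Finset.sum_filter_add_sum_filter_not]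
  -- the fibration over subcube indices
  have hmaps : ∀ x ∈ S, A x ∈ I := by
    intro x hx
    rw [hSW] at hx
    rw [hI, Fintype.mem_piFinset]
    intro i
    rw [Finset.mem_Icc]
    obtain ⟨hh1, hh2⟩ := hWm x hx i
    have h0 : (0 : EuclideanSpace ℝ (Fin d)) i = 0 := rfl
    rw [h0] at hh1 hh2
    exact rd_range hnm.le (x i) (by linarith) (by linarith)
  -- same-cube part equals the sum of subcube energies
  have hsame_eq : sameSum = ∑ a ∈ I, ∑ x ∈ W.filter (· ∈ triCube d n (za a)),
      ∑ y ∈ (W.filter (· ∈ triCube d n (za a))).filter (fun y => y ≠ x ∧ dist x y ≤ 1),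
        (1/2) * (u a x - u a y)^2 := by
    rw [hsameSum, ← Finset.sum_fiberwise_of_maps_to hmaps]
    apply Finset.sum_congr rfl
    intro a _
    have hfib : S.filter (fun x => A x = a) = W.filter (· ∈ triCube d n (za a)) := by
      rw [hSW]
      apply Finset.filter_congr
      intro x _
      constructor
      · intro h
        exact (mem_triCube_iff a x).mpr (fun i => congrFun h i)
      · intro h
        funext i
        exact (mem_triCube_iff a x).mp h i
    rw [hfib]
    apply Finset.sum_congr rfl
    intro x hx
    have hax : A x = a :=
      funext fun i => (mem_triCube_iff a x).mp (Finset.mem_filter.mp hx).2 i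
    have hsets : (S.filter (fun y => y ≠ x ∧ dist x y ≤ 1)).filter (fun y => A y = A x)
        = (W.filter (· ∈ triCube d n (za a))).filter (fun y => y ≠ x ∧ dist x y ≤ 1) := by
      rw [hSW, Finset.filter_filter, Finset.filter_filter]
      apply Finset.filter_congr
      intro y _
      constructor
      · rintro ⟨hcond, hay⟩
        exact ⟨(mem_triCube_iff a y).mpr (fun i => congrFun (hay.trans hax) i), hcond⟩
      · rintro ⟨hcube, hcond⟩
        exact ⟨hcond, (funext fun i => (mem_triCube_iff a y).mp hcube i).trans hax.symm⟩
    rw [hsets]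
    apply Finset.sum_congr rfl
    intro y hy
    have hay : A y = a :=
      funext fun i => (mem_triCube_iff a y).mp (Finset.mem_filter.mp (Finset.mem_filter.mp hy).1).2 i
    simp only [hU, hax, hay]
  have hsame_le : sameSum ≤ ∑ a ∈ I, (sInf (cubeEnergies d W l n (za a) p) + ε) := by
    rw [hsame_eq]
    exact Finset.sum_le_sum (fun a _ => (hu2 a).le)
  -- cross-cube part
  set Bp : EuclideanSpace ℝ (Fin d) → Prop :=
    fun x => ∃ i, (3:ℝ) ^ n / 2 - 1 ≤ |x i - 3 ^ n * (rd n (x i) : ℝ)| with hBp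
  have hdiff_le1 : diffSum ≤ ∑ x ∈ S, (if Bp x then (2^d * P * (‖p‖^2/2)) else 0) := by
    rw [hdiffSum]
    apply Finset.sum_le_sum
    intro x hx
    have hxW : x ∈ W := by rw [hSW] at hx; exact hx
    by_cases hB : Bp x
    · rw [if_pos hB]
      have hterm : ∀ y ∈ (S.filter (fun y => y ≠ x ∧ dist x y ≤ 1)).filter (fun y => ¬ A y = A x),
          (1/2) * (U x - U y)^2 ≤ ‖p‖^2/2 := by
        intro y hy
        rw [Finset.mem_filter] at hy
        obtain ⟨hy1, hyA⟩ := hy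
        rw [Finset.mem_filter] at hy1
        obtain ⟨hyS, _, hydist⟩ := hy1
        have hyW : y ∈ W := by rw [hSW] at hyS; exact hyS
        obtain ⟨i0, hi0⟩ := Function.ne_iff.mp hyA
        have hUx : U x = Lp x := by
          have hth := cross_mem_thickBdry (d := d) hln.le x y
            (fun i => le_trans (coord_le_dist x y i) hydist) ⟨i0, Ne.symm hi0⟩
          exact hu1 (A x) x hxW hth
        have hUy : U y = Lp y := by
          have hth := cross_mem_thickBdry (d := d) hln.le y x
            (fun i => by
              have := coord_le_dist y x i
              rw [dist_comm] at this
              exact le_trans this hydist) ⟨i0, hi0⟩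
          exact hu1 (A y) y hyW hth
        rw [hUx, hUy]
        have hlpb : (Lp x - Lp y)^2 ≤ ‖p‖^2 := lp_bound p x y hydist
        linarith
      calc (∑ y ∈ (S.filter (fun y => y ≠ x ∧ dist x y ≤ 1)).filter (fun y => ¬ A y = A x),
              (1/2) * (U x - U y)^2)
          ≤ ∑ _y ∈ (S.filter (fun y => y ≠ x ∧ dist x y ≤ 1)).filter (fun y => ¬ A y = A x),
              (‖p‖^2/2) := Finset.sum_le_sum hterm
        _ = (((S.filter (fun y => y ≠ x ∧ dist x y ≤ 1)).filter (fun y => ¬ A y = A x)).card : ℝ)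
              * (‖p‖^2/2) := by rw [Finset.sum_const, nsmul_eq_mul]
        _ ≤ (2^d * P) * (‖p‖^2/2) := by
            apply mul_le_mul_of_nonneg_right _ (by positivity)
            have hsub : (S.filter (fun y => y ≠ x ∧ dist x y ≤ 1)).filter (fun y => ¬ A y = A x)
                ⊆ W.filter (fun y => dist x y ≤ 1) := by
              intro y hy
              rw [Finset.mem_filter] at hy ⊢
              obtain ⟨hy1, _⟩ := hy
              rw [Finset.mem_filter] at hy1
              obtain ⟨hyS, _, hyd⟩ := hy1
              rw [hSW] at hyS
              exact ⟨hyS, hyd⟩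
            calc ((((S.filter (fun y => y ≠ x ∧ dist x y ≤ 1)).filter (fun y => ¬ A y = A x)).card : ℕ) : ℝ)
                ≤ ((W.filter (fun y => dist x y ≤ 1)).card : ℝ) := by
                  exact_mod_cast Nat.cast_le.mpr (Finset.card_le_card hsub)
              _ ≤ 2^d * P := neighbor_card W P hP x
        _ = 2^d * P * (‖p‖^2/2) := by ring
    · rw [if_neg hB]
      apply le_of_eq
      apply Finset.sum_eq_zero
      intro y hy
      exfalso
      rw [Finset.mem_filter] at hy
      obtain ⟨hy1, hyA⟩ := hy
      rw [Finset.mem_filter] at hy1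
      obtain ⟨_, _, hydist⟩ := hy1
      obtain ⟨i0, hi0⟩ := Function.ne_iff.mp hyA
      exact hB (cross_bprop x y (fun i => le_trans (coord_le_dist x y i) hydist) ⟨i0, Ne.symm hi0⟩)
  have hdiff_le2 : (∑ x ∈ S, (if Bp x then (2^d * P * (‖p‖^2/2)) else 0))
      = ((W.filter Bp).card : ℝ) * (2^d * P * (‖p‖^2/2)) := by
    rw [← Finset.sum_filter, hSW, Finset.sum_const, nsmul_eq_mul]
  have hcardB : ((W.filter Bp).card : ℝ)
      ≤ (d:ℝ) * (P * (2 * ((3:ℝ) ^ (m - n) + 1) * 3 ^ (m * (d - 1)))) := by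
    have hsub : W.filter Bp ⊆ (Finset.univ : Finset (Fin d)).biUnion
        (fun i => W.filter (fun x => (3:ℝ) ^ n / 2 - 1 ≤ |x i - 3 ^ n * (rd n (x i) : ℝ)|)) := by
      intro x hx
      rw [Finset.mem_filter] at hx
      obtain ⟨hxW, i0, hi0⟩ := hx
      rw [Finset.mem_biUnion]
      exact ⟨i0, Finset.mem_univ _, Finset.mem_filter.mpr ⟨hxW, hi0⟩⟩
    calc ((W.filter Bp).card : ℝ)
        ≤ ((((Finset.univ : Finset (Fin d)).biUnion
            (fun i => W.filter (fun x => (3:ℝ) ^ n / 2 - 1 ≤ |x i - 3 ^ n * (rd n (x i) : ℝ)|))).card : ℕ) : ℝ) := by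
          exact Nat.cast_le.mpr (Finset.card_le_card hsub)
      _ ≤ ∑ i : Fin d, ((W.filter (fun x => (3:ℝ) ^ n / 2 - 1 ≤ |x i - 3 ^ n * (rd n (x i) : ℝ)|)).card : ℝ) := by
          push_cast
          exact_mod_cast Nat.cast_le.mpr (Finset.card_biUnion_le)
      _ ≤ ∑ _i : Fin d, P * (2 * ((3:ℝ) ^ (m - n) + 1) * 3 ^ (m * (d - 1))) := by
          apply Finset.sum_le_sum
          intro i _
          exact slab_card (by omega) hnm.le W hWm P hP i
      _ = (d:ℝ) * (P * (2 * ((3:ℝ) ^ (m - n) + 1) * 3 ^ (m * (d - 1)))) := by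
          rw [Finset.sum_const, Finset.card_univ, Fintype.card_fin, nsmul_eq_mul]
  -- put together
  set DB := ((d:ℝ) * (P * (2 * ((3:ℝ) ^ (m - n) + 1) * 3 ^ (m * (d - 1))))) * (2^d * P * (‖p‖^2/2))
    with hDB
  have hdiff_total : diffSum ≤ DB := by
    refine le_trans hdiff_le1 (le_trans (le_of_eq hdiff_le2) ?_)
    rw [hDB]
    apply mul_le_mul_of_nonneg_right hcardB (by positivity)
  -- sInf in terms of muCG
  have hsInf_eq : ∀ a : Fin d → ℤ, sInf (cubeEnergies d W l n (za a) p)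
      = (3:ℝ)^(d*n) * muCG d W l n (za a) p := by
    intro a
    have h1 : muCG d W l n (za a) p = ((3:ℝ)^(d*n))⁻¹ * sInf (cubeEnergies d W l n (za a) p) := rfl
    rw [h1, ← mul_assoc, mul_inv_cancel₀ (by positivity : ((3:ℝ)^(d*n)) ≠ 0), one_mul]
  have hsum_sInf : (∑ a ∈ I, (sInf (cubeEnergies d W l n (za a) p) + ε))
      = (3:ℝ)^(d*n) * (∑ a ∈ I, muCG d W l n (za a) p) + (I.card : ℝ) * ε := by
    rw [Finset.sum_add_distrib, Finset.sum_const, nsmul_eq_mul, Finset.mul_sum]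
    congr 1
    exact Finset.sum_congr rfl (fun a _ => hsInf_eq a)
  -- power bookkeeping
  have hpow : (3:ℝ)^(d*m) = 3^(d*n) * 3^(d*(m-n)) := by
    rw [← pow_add]
    congr 1
    have hmn : n + (m - n) = m := by omega
    calc d*m = d*(n+(m-n)) := by rw [hmn]
      _ = d*n + d*(m-n) := Nat.mul_add d n (m-n)
  have hpinv : ((3:ℝ)^(d*m))⁻¹ * (3:ℝ)^(d*n) = ((3:ℝ)^(d*(m-n)))⁻¹ := by
    rw [hpow, mul_inv]
    have h1 : ((3:ℝ)^(d*n)) ≠ 0 := by positivity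
    field_simp
  have hεbound : ((3:ℝ)^(d*m))⁻¹ * ((I.card : ℝ) * ε) ≤ δ := by
    rw [hε]
    have hpm : (0:ℝ) < 3^(d*m) := by positivity
    have heq : ((3:ℝ)^(d*m))⁻¹ * ((I.card:ℝ) * (δ * 3 ^ (d * m) / ((I.card : ℝ) + 1)))
        = δ * ((I.card:ℝ) / ((I.card:ℝ)+1)) := by
      field_simp
    rw [heq]
    have h2 : (I.card:ℝ) / ((I.card:ℝ)+1) ≤ 1 := by
      rw [div_le_one hIcard1]; linarith
    nlinarith
  -- the diff term bound
  have hdifffinal : ((3:ℝ)^(d*m))⁻¹ * DB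
      ≤ 2^(d+1) * (d:ℝ) * P^2 * ‖p‖^2 * ((3:ℝ)^(n-l))⁻¹ := by
    set R : ℝ := (3:ℝ)^(m-n) with hR
    set Q : ℝ := (3:ℝ)^(m*(d-1)) with hQ
    set M3 : ℝ := (3:ℝ)^(d*m) with hM3
    have hQM : Q * (3:ℝ)^m = M3 := by
      rw [hQ, hM3, ← pow_add]
      congr 1
      have hd1 : 1 ≤ d := by omega
      calc m*(d-1) + m = m*(d-1+1) := by rw [Nat.mul_succ]
        _ = m*d := by congr 1; omega
        _ = d*m := Nat.mul_comm m d
    have hRn : R * (3:ℝ)^n = (3:ℝ)^m := by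
      rw [hR, ← pow_add]
      congr 1
      omega
    have hR1 : (1:ℝ) ≤ R := one_le_pow₀ (by norm_num)
    have hQ0 : (0:ℝ) < Q := by positivity
    have h3m0 : (0:ℝ) < (3:ℝ)^m := by positivity
    have h3n0 : (0:ℝ) < (3:ℝ)^n := by positivity
    have hM30 : (0:ℝ) < M3 := by positivity
    have e1 : Q * M3⁻¹ = ((3:ℝ)^m)⁻¹ := by
      rw [← hQM]
      field_simp
    have e2 : R * ((3:ℝ)^m)⁻¹ = ((3:ℝ)^n)⁻¹ := by
      rw [← hRn]
      have hR0 : (0:ℝ) < R := by positivity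
      field_simp
    have e3 : ((3:ℝ)^n)⁻¹ ≤ ((3:ℝ)^(n-l))⁻¹ := by
      apply inv_anti₀ (by positivity)
      exact pow_le_pow_right₀ (by norm_num) (by omega)
    calc M3⁻¹ * DB = ((d:ℝ)*P^2*‖p‖^2*2^d) * ((R+1) * (Q * M3⁻¹)) := by
          rw [hDB]; ring
      _ ≤ ((d:ℝ)*P^2*‖p‖^2*2^d) * ((2*R) * (Q * M3⁻¹)) := by
          apply mul_le_mul_of_nonneg_left _ (by positivity)
          apply mul_le_mul_of_nonneg_right _ (by positivity)
          linarith
      _ = ((d:ℝ)*P^2*‖p‖^2*2^(d+1)) * (R * ((3:ℝ)^m)⁻¹) := by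
          rw [e1]; ring
      _ = ((d:ℝ)*P^2*‖p‖^2*2^(d+1)) * ((3:ℝ)^n)⁻¹ := by rw [e2]
      _ ≤ ((d:ℝ)*P^2*‖p‖^2*2^(d+1)) * ((3:ℝ)^(n-l))⁻¹ :=
          mul_le_mul_of_nonneg_left e3 (by positivity)
      _ = 2^(d+1) * (d:ℝ) * P^2 * ‖p‖^2 * ((3:ℝ)^(n-l))⁻¹ := by ring
  -- final chain
  have hinv0 : (0:ℝ) ≤ ((3:ℝ)^(d*m))⁻¹ := by positivity
  have hchain1 : muCG d W l m 0 p ≤ ((3:ℝ)^(d*m))⁻¹ * sameSum + ((3:ℝ)^(d*m))⁻¹ * diffSum := by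
    rw [← mul_add, ← hsplit]
    exact hmu
  have hchain2 : ((3:ℝ)^(d*m))⁻¹ * sameSum
      ≤ ((3:ℝ)^(d*(m-n)))⁻¹ * (∑ a ∈ I, muCG d W l n (za a) p) + δ := by
    have h1 : ((3:ℝ)^(d*m))⁻¹ * sameSum
        ≤ ((3:ℝ)^(d*m))⁻¹ * ((3:ℝ)^(d*n) * (∑ a ∈ I, muCG d W l n (za a) p) + (I.card : ℝ) * ε) := by
      apply mul_le_mul_of_nonneg_left _ hinv0
      rw [← hsum_sInf]
      exact hsame_le
    have h2 : ((3:ℝ)^(d*m))⁻¹ * ((3:ℝ)^(d*n) * (∑ a ∈ I, muCG d W l n (za a) p) + (I.card : ℝ) * ε)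
        = ((3:ℝ)^(d*(m-n)))⁻¹ * (∑ a ∈ I, muCG d W l n (za a) p)
          + ((3:ℝ)^(d*m))⁻¹ * ((I.card : ℝ) * ε) := by
      rw [mul_add, ← mul_assoc, hpinv]
    rw [h2] at h1
    linarith [hεbound]
  have hchain3 : ((3:ℝ)^(d*m))⁻¹ * diffSum
      ≤ 2^(d+1) * (d:ℝ) * P^2 * ‖p‖^2 * ((3:ℝ)^(n-l))⁻¹ := by
    refine le_trans ?_ hdifffinal
    exact mul_le_mul_of_nonneg_left hdiff_total hinv0
  have hgoalsum : (∑ a ∈ I, muCG d W l n (WithLp.toLp 2 (fun i => (3 : ℝ) ^ n * (a i : ℝ))) p)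
      = ∑ a ∈ I, muCG d W l n (za a) p := rfl
  rw [hgoalsum]
  calc muCG d W l m 0 p
      ≤ ((3:ℝ)^(d*m))⁻¹ * sameSum + ((3:ℝ)^(d*m))⁻¹ * diffSum := hchain1
    _ ≤ (((3:ℝ)^(d*(m-n)))⁻¹ * (∑ a ∈ I, muCG d W l n (za a) p) + δ)
        + 2^(d+1) * (d:ℝ) * P^2 * ‖p‖^2 * ((3:ℝ)^(n-l))⁻¹ := add_le_add hchain2 hchain3
    _ = ((3:ℝ)^(d*(m-n)))⁻¹ * (∑ a ∈ I, muCG d W l n (za a) p)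
        + 2^(d+1) * (d:ℝ) * P^2 * ‖p‖^2 * ((3:ℝ)^(n-l))⁻¹ + δ := by ring
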